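/- For a curve γ : [0,1] → X in a metric space that is absolutely continuous (i.e., d(γ_t, γ_s) ≤ ∫_t^s f(r) dr for some f ∈ L¹([0,1])), the metric speed |γ̇_t| := lim_{h→0} d(γ_{t+h}, γ_t)/|h| exists for a.e. t ∈ [0,1], and it is the a.e.-minimal admissible f in the defining inequality. -/

import Mathlib

open Filter Topology MeasureTheory Set Metric

lemma ae_hasDerivAt_primitive {g : ℝ → ℝ} (hg : Integrable g) :
    ∀ᵐ t, HasDerivAt (fun s => ∫ r in (0:ℝ)..s, g r) (g t) t := by
  filter_upwards [IsUnifLocDoublingMeasure.ae_tendsto_average_norm_sub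
    (μ := (volume : Measure ℝ)) hg.locallyIntegrable 1] with x hx
  rw [hasDerivAt_iff_tendsto_slope]
  set F : ℝ → ℝ := fun s => ∫ r in (0:ℝ)..s, g r with hF
  have hδ : Tendsto (fun y : ℝ => |y - x| / 2) (𝓝[≠] x) (𝓝[>] 0) := by
    apply tendsto_nhdsWithin_of_tendsto_nhds_of_eventually_within
    · have : Tendsto (fun y : ℝ => |y - x| / 2) (𝓝 x) (𝓝 (|x - x| / 2)) :=
        (((continuous_id.sub continuous_const).abs.div_const 2).tendsto x)
      simp only [sub_self, abs_zero, zero_div] at this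
      exact this.mono_left nhdsWithin_le_nhds
    · filter_upwards [self_mem_nhdsWithin] with y hy
      exact div_pos (abs_pos.2 (sub_ne_zero.2 hy)) (by norm_num)
  have hmem : ∀ᶠ (y : ℝ) in 𝓝[≠] x, x ∈ closedBall ((x + y)/2) (1 * (|y - x| / 2)) := by
    filter_upwards with y
    simp only [mem_closedBall, Real.dist_eq, one_mul]
    have h1 : x - (x + y)/2 = (x - y)/2 := by ring
    rw [h1, abs_div, abs_two, abs_sub_comm x y]
  have havg := hx (fun y => (x + y)/2) (fun y => |y - x| / 2) hδ hmem
  have key : ∀ᶠ y in 𝓝[≠] x, ‖slope F x y - g x‖ ≤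
      ⨍ z in closedBall ((x + y)/2) (|y - x| / 2), ‖g z - g x‖ := by
    filter_upwards [self_mem_nhdsWithin] with y hy
    have hyx : y - x ≠ 0 := sub_ne_zero.2 hy
    have hyx' : |y - x| > 0 := abs_pos.2 hyx
    have hsub : uIoc x y ⊆ closedBall ((x + y)/2) (|y - x| / 2) := by
      intro z hz
      rw [Real.closedBall_eq_Icc]
      have hz' : z ∈ Icc (min x y) (max x y) := Ioc_subset_Icc_self hz
      rcases le_total x y with h | h
      · rw [abs_of_nonneg (by linarith : (0:ℝ) ≤ y - x)]
        rw [min_eq_left h, max_eq_right h] at hz'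
        constructor <;> [linarith [hz'.1]; linarith [hz'.2]]
      · rw [abs_of_nonpos (by linarith : y - x ≤ 0)]
        rw [min_eq_right h, max_eq_left h] at hz'
        constructor <;> [linarith [hz'.1]; linarith [hz'.2]]
    have hFy : F y - F x = ∫ r in x..y, g r :=
      intervalIntegral.integral_interval_sub_left (hg.intervalIntegrable) (hg.intervalIntegrable)
    have hslope : slope F x y - g x = (∫ r in x..y, (g r - g x)) / (y - x) := by
      have h2 : (∫ r in x..y, (g r - g x)) = (F y - F x) - (y - x) * g x := by
        rw [intervalIntegral.integral_sub hg.intervalIntegrable intervalIntegrable_const,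
          intervalIntegral.integral_const, ← hFy, smul_eq_mul]
      rw [slope_def_field, h2]
      field_simp
    have hcb : IntegrableOn (fun z => ‖g z - g x‖) (closedBall ((x + y)/2) (|y - x| / 2)) := by
      apply Integrable.norm
      exact hg.integrableOn.sub (integrableOn_const (by
        rw [Real.volume_closedBall]; exact ENNReal.ofReal_ne_top))
    have hintle : ‖∫ r in x..y, (g r - g x)‖ ≤
        ∫ z in closedBall ((x + y)/2) (|y - x| / 2), ‖g z - g x‖ := by
      refine (intervalIntegral.norm_integral_le_integral_norm_uIoc).trans ?_
      exact setIntegral_mono_set hcb (Eventually.of_forall fun z => norm_nonneg _)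
        (HasSubset.Subset.eventuallyLE hsub)
    have hvol : (volume (closedBall ((x + y)/2) (|y - x| / 2))).toReal = |y - x| := by
      rw [Real.volume_closedBall, ENNReal.toReal_ofReal (by positivity)]
      ring
    rw [hslope, setAverage_eq, measureReal_def, hvol, smul_eq_mul]
    rw [norm_div, Real.norm_eq_abs (y - x), div_le_iff₀ hyx']
    calc ‖∫ r in x..y, (g r - g x)‖
        ≤ ∫ z in closedBall ((x + y)/2) (|y - x| / 2), ‖g z - g x‖ := hintle
      _ = |y - x| * (|y - x|⁻¹ * ∫ z in closedBall ((x + y)/2) (|y - x| / 2), ‖g z - g x‖) := by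
          rw [← mul_assoc, mul_inv_cancel₀ (ne_of_gt hyx'), one_mul]
      _ = _ := by ring
  rw [tendsto_iff_norm_sub_tendsto_zero]
  exact squeeze_zero' (Eventually.of_forall fun y => norm_nonneg _) key havg


lemma mono_integrableOn_deriv {u : ℝ → ℝ} (hu : Monotone u) (a b : ℝ) :
    IntegrableOn (deriv u) (Ioc a b) := by
  have hae : ∀ᵐ x, deriv u x = (hu.stieltjesFunction.measure.rnDeriv volume x).toReal := by
    filter_upwards [hu.ae_hasDerivAt] with x hx using hx.deriv
  have hfin : hu.stieltjesFunction.measure (Ioc a b) ≠ ⊤ := by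
    rw [StieltjesFunction.measure_Ioc]; exact ENNReal.ofReal_ne_top
  exact (Measure.integrableOn_toReal_rnDeriv hfin).congr_fun_ae
    (ae_restrict_of_ae (hae.mono fun x h => h.symm))

lemma mono_cont_integral_deriv_le {u : ℝ → ℝ} (hu : Monotone u) (hc : Continuous u)
    {a b : ℝ} (hab : a ≤ b) :
    ∫ t in Ioc a b, deriv u t ≤ u b - u a := by
  have hae : ∀ᵐ x, deriv u x = (hu.stieltjesFunction.measure.rnDeriv volume x).toReal := by
    filter_upwards [hu.ae_hasDerivAt] with x hx using hx.deriv
  have hfin : hu.stieltjesFunction.measure (Ioc a b) ≠ ⊤ := by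
    rw [StieltjesFunction.measure_Ioc]; exact ENNReal.ofReal_ne_top
  have hst : ∀ x, hu.stieltjesFunction x = u x := by
    intro x
    rw [hu.stieltjesFunction_eq]
    exact rightLim_eq_of_tendsto ((hc.tendsto x).mono_left nhdsWithin_le_nhds)
  calc ∫ t in Ioc a b, deriv u t
      = ∫ t in Ioc a b, (hu.stieltjesFunction.measure.rnDeriv volume t).toReal :=
        integral_congr_ae (ae_restrict_of_ae hae)
    _ ≤ (hu.stieltjesFunction.measure (Ioc a b)).toReal :=
        Measure.setIntegral_toReal_rnDeriv_le hfin
    _ = u b - u a := by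
        rw [StieltjesFunction.measure_Ioc, ENNReal.toReal_ofReal (by
          rw [hst, hst]; exact sub_nonneg.2 (hu hab)), hst, hst]



/-- Existence of the metric speed: if `γ : [0,1] → X` is absolutely continuous, i.e.
`d(γ_t, γ_s) ≤ ∫_t^s f(r) dr` for some `f ∈ L¹([0,1])`, then for a.e. `t ∈ [0,1]` the limit
`|γ̇_t| := lim_{h→0} d(γ_{t+h}, γ_t)/|h|` exists, it is admissible in the defining
inequality, and it is minimal (in the a.e. sense) among all admissible functions. -/
theorem exists_metricSpeed {X : Type*} [MetricSpace X] (γ : ℝ → X) (f : ℝ → ℝ)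
    (hf : IntegrableOn f (Icc (0:ℝ) 1))
    (hac : ∀ t s : ℝ, t ∈ Icc (0:ℝ) 1 → s ∈ Icc (0:ℝ) 1 → t ≤ s →
      dist (γ t) (γ s) ≤ ∫ r in t..s, f r) :
    ∃ ms : ℝ → ℝ,
      (∀ᵐ t ∂(volume.restrict (Icc (0:ℝ) 1)),
        Tendsto (fun h : ℝ => dist (γ (t + h)) (γ t) / |h|) (𝓝[≠] 0) (𝓝 (ms t))) ∧
      IntegrableOn ms (Icc (0:ℝ) 1) ∧
      (∀ t s : ℝ, t ∈ Icc (0:ℝ) 1 → s ∈ Icc (0:ℝ) 1 → t ≤ s →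
        dist (γ t) (γ s) ≤ ∫ r in t..s, ms r) ∧
      (∀ g : ℝ → ℝ, IntegrableOn g (Icc (0:ℝ) 1) →
        (∀ t s : ℝ, t ∈ Icc (0:ℝ) 1 → s ∈ Icc (0:ℝ) 1 → t ≤ s →
          dist (γ t) (γ s) ≤ ∫ r in t..s, g r) →
        ∀ᵐ t ∂(volume.restrict (Icc (0:ℝ) 1)), ms t ≤ g t) := by
  classical
  set p : ℝ → ℝ := fun t => max 0 (min t 1) with hpdef
  have hpmem : ∀ t, p t ∈ Icc (0:ℝ) 1 := fun t =>
    ⟨le_max_left _ _, max_le (by norm_num) (min_le_right _ _)⟩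
  have hpmono : Monotone p := fun t s h => max_le_max le_rfl (min_le_min h le_rfl)
  have hpid : ∀ t ∈ Icc (0:ℝ) 1, p t = t := fun t ht => by
    simp only [hpdef]
    rw [min_eq_left ht.2, max_eq_right ht.1]
  set G : ℝ → X := fun t => γ (p t) with hGdef
  have hGIcc : ∀ t ∈ Icc (0:ℝ) 1, G t = γ t := fun t ht => by rw [hGdef]; simp [hpid t ht]
  set fa : ℝ → ℝ := (Icc (0:ℝ) 1).indicator (fun t => |f t|) with hfadef
  have hfa_nonneg : ∀ t, 0 ≤ fa t := fun t => by
    by_cases h : t ∈ Icc (0:ℝ) 1 <;> simp [hfadef, indicator_apply, h, abs_nonneg]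
  have hfa_int : Integrable fa := IntegrableOn.integrable_indicator (hf.abs) measurableSet_Icc
  -- set comparison
  have hsetEq : ∀ t s : ℝ, t ≤ s →
      (Ioc t s ∩ Icc (0:ℝ) 1 : Set ℝ) =ᵐ[volume] Ioc (p t) (p s) := by
    intro t s hts
    have hBA : Ioc (p t) (p s) ⊆ Ioc t s ∩ Icc 0 1 := by
      rintro x ⟨hx1, hx2⟩
      have hx0 : (0:ℝ) < x := lt_of_le_of_lt (le_max_left _ _) hx1
      have hx1' : x ≤ 1 := hx2.trans (max_le zero_le_one (min_le_right _ _))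
      have hxt : t < x := by
        have := lt_of_le_of_lt (le_max_right 0 (min t 1)) hx1
        rcases min_lt_iff.1 this with h | h
        · exact h
        · linarith
      have hxs : x ≤ s := by
        rcases le_max_iff.1 hx2 with h | h
        · linarith
        · exact h.trans (min_le_left _ _)
      exact ⟨⟨hxt, hxs⟩, hx0.le, hx1'⟩
    have hAB : Ioc t s ∩ Icc 0 1 ⊆ Ioc (p t) (p s) ∪ {0} := by
      rintro x ⟨⟨hx1, hx2⟩, hx3, hx4⟩
      rcases eq_or_lt_of_le hx3 with h0 | h0
      · right; simp [← h0]
      · left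
        exact ⟨max_lt h0 (lt_of_le_of_lt (min_le_left _ _) hx1),
          le_max_of_le_right (le_min hx2 hx4)⟩
    rw [MeasureTheory.ae_eq_set]
    constructor
    · refine measure_mono_null (fun x hx => ?_) (measure_singleton (0:ℝ))
      rcases hAB hx.1 with h | h
      · exact absurd h hx.2
      · exact h
    · rw [diff_eq_empty.2 hBA]
      exact measure_empty
  have hIntOn : ∀ a b : ℝ, a ∈ Icc (0:ℝ) 1 → b ∈ Icc (0:ℝ) 1 → a ≤ b →
      IntervalIntegrable f volume a b := by
    intro a b ha hb hab
    apply IntegrableOn.intervalIntegrable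
    rw [uIcc_of_le hab]
    exact hf.mono_set (Icc_subset_Icc ha.1 hb.2)
  have hInt : ∀ t s : ℝ, t ≤ s → ∫ r in t..s, fa r = ∫ r in Ioc (p t) (p s), |f r| := by
    intro t s hts
    rw [intervalIntegral.integral_of_le hts, hfadef,
      setIntegral_indicator measurableSet_Icc]
    exact setIntegral_congr_set (hsetEq t s hts)
  have h3 : ∀ t s : ℝ, t ≤ s → dist (G t) (G s) ≤ ∫ r in t..s, fa r := by
    intro t s hts
    rw [hInt t s hts, ← intervalIntegral.integral_of_le (hpmono hts)]
    refine (hac (p t) (p s) (hpmem t) (hpmem s) (hpmono hts)).trans ?_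
    exact intervalIntegral.integral_mono_on (hpmono hts)
      (hIntOn _ _ (hpmem t) (hpmem s) (hpmono hts))
      ((hIntOn _ _ (hpmem t) (hpmem s) (hpmono hts)).abs)
      (fun x _ => le_abs_self _)
  set F : ℝ → ℝ := fun t => ∫ r in (0:ℝ)..t, fa r with hFdef
  have hFsub : ∀ t s : ℝ, F s - F t = ∫ r in t..s, fa r := fun t s =>
    intervalIntegral.integral_interval_sub_left hfa_int.intervalIntegrable
      hfa_int.intervalIntegrable
  have hFmono : Monotone F := by
    intro t s h
    have h0 : 0 ≤ ∫ r in t..s, fa r :=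
      intervalIntegral.integral_nonneg h (fun x _ => hfa_nonneg x)
    have := hFsub t s
    linarith
  have hFcont : Continuous F :=
    intervalIntegral.continuous_primitive (fun a b => hfa_int.intervalIntegrable) 0
  have hdistF : ∀ t s : ℝ, dist (G t) (G s) ≤ |F s - F t| := by
    intro t s
    rcases le_total t s with h | h
    · rw [abs_of_nonneg (sub_nonneg.2 (hFmono h)), hFsub]
      exact h3 t s h
    · rw [abs_of_nonpos (sub_nonpos.2 (hFmono h)), neg_sub, hFsub, dist_comm]
      exact h3 s t h
  have hGcont : Continuous G := by
    rw [continuous_iff_continuousAt]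
    intro t
    rw [ContinuousAt, tendsto_iff_dist_tendsto_zero]
    apply squeeze_zero (fun s => dist_nonneg) (fun s => (hdistF s t).trans_eq (abs_sub_comm _ _))
    have : Tendsto (fun s => |F s - F t|) (𝓝 t) (𝓝 |F t - F t|) :=
      ((hFcont.sub continuous_const).abs).tendsto t
    simpa using this
  -- the distance functions
  set φ : ℚ → ℝ → ℝ := fun q t => dist (G t) (G (q:ℝ)) with hφdef
  have hφcont : ∀ q, Continuous (φ q) := fun q => hGcont.dist continuous_const
  have hφabs : ∀ q (t s : ℝ), |φ q s - φ q t| ≤ dist (G s) (G t) := fun q t s =>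
    abs_dist_sub_le _ _ _
  have hφF : ∀ q (t s : ℝ), t ≤ s → |φ q s - φ q t| ≤ F s - F t := fun q t s h => by
    have := (hφabs q t s).trans ((dist_comm (G s) (G t)) ▸ hdistF t s)
    rwa [abs_of_nonneg (sub_nonneg.2 (hFmono h))] at this
  have hup : ∀ q, Monotone (fun t => F t + φ q t) := by
    intro q t s h
    have := hφF q t s h
    have h1 := abs_le.1 this
    simp only []
    linarith [h1.1]
  have hum : ∀ q, Monotone (fun t => F t - φ q t) := by
    intro q t s h
    have h1 := abs_le.1 (hφF q t s h)
    simp only []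
    linarith [h1.2]
  set D : ℚ → ℝ → ℝ := fun q => deriv (φ q) with hDdef
  have hDmeas : ∀ q, Measurable (D q) := fun q => measurable_deriv _
  -- almost-everywhere good set
  have hFderiv : ∀ᵐ t, HasDerivAt F (fa t) t := ae_hasDerivAt_primitive hfa_int
  have hup_diff : ∀ᵐ t, ∀ q : ℚ, DifferentiableAt ℝ (fun s => F s + φ q s) t :=
    ae_all_iff.2 fun q => (hup q).ae_differentiableAt
  have hgood : ∀ᵐ t, HasDerivAt F (fa t) t ∧
      ∀ q : ℚ, DifferentiableAt ℝ (φ q) t ∧ |D q t| ≤ fa t := by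
    filter_upwards [hFderiv, hup_diff] with t hF hq
    refine ⟨hF, fun q => ?_⟩
    have hd : DifferentiableAt ℝ (φ q) t := by
      have heq : φ q = fun s => (F s + φ q s) - F s := by funext s; ring
      rw [heq]
      exact (hq q).sub hF.differentiableAt
    refine ⟨hd, ?_⟩
    -- derivative bound via right slopes
    have hmap : (𝓝[>] t) ≤ (𝓝[≠] t) := nhdsWithin_mono _ fun x hx => ne_of_gt hx
    have hsφ : Tendsto (fun s => |slope (φ q) t s|) (𝓝[>] t) (𝓝 |D q t|) :=
      (continuous_abs.tendsto _).comp
        (((hasDerivAt_iff_tendsto_slope).1 hd.hasDerivAt).mono_left hmap)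
    have hsF : Tendsto (slope F t) (𝓝[>] t) (𝓝 (fa t)) :=
      ((hasDerivAt_iff_tendsto_slope).1 hF).mono_left hmap
    refine le_of_tendsto_of_tendsto hsφ hsF ?_
    filter_upwards [self_mem_nhdsWithin] with s (hs : t < s)
    rw [slope_def_field, slope_def_field, abs_div, abs_of_pos (sub_pos.2 hs)]
    exact div_le_div_of_nonneg_right (hφF q t s hs.le) (sub_pos.2 hs).le
  -- the metric speed
  set S : ℝ → ENNReal := fun t => ⨆ q : ℚ, (‖D q t‖₊ : ENNReal) with hSdef
  set ms : ℝ → ℝ := fun t => (S t).toReal with hmsdef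
  have hms_nonneg : ∀ t, 0 ≤ ms t := fun t => ENNReal.toReal_nonneg
  have hSmeas : Measurable S :=
    Measurable.iSup fun q => ((hDmeas q).nnnorm).coe_nnreal_ennreal
  have hms_meas : Measurable ms := hSmeas.ennreal_toReal
  -- pointwise facts at good points
  have hmspt : ∀ t : ℝ, (∀ q : ℚ, |D q t| ≤ fa t) →
      ms t ≤ fa t ∧ (∀ q : ℚ, |D q t| ≤ ms t) ∧
      (∀ ε : ℝ, 0 < ε → ∃ q : ℚ, ms t - ε < |D q t|) := by
    intro t ht
    have hStop : S t ≤ ENNReal.ofReal (fa t) := by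
      refine iSup_le fun q => ?_
      rw [← enorm_eq_nnnorm, ← ofReal_norm, Real.norm_eq_abs]
      exact ENNReal.ofReal_le_ofReal (ht q)
    have hSne : S t ≠ ⊤ := ne_top_of_le_ne_top ENNReal.ofReal_ne_top hStop
    have h1 : ms t ≤ fa t := by
      rw [hmsdef]
      exact ENNReal.toReal_le_of_le_ofReal (hfa_nonneg t) hStop
    have h2 : ∀ q : ℚ, |D q t| ≤ ms t := by
      intro q
      have hle : (‖D q t‖₊ : ENNReal) ≤ S t := le_iSup (fun q : ℚ => (‖D q t‖₊ : ENNReal)) q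
      have := ENNReal.toReal_mono hSne hle
      simpa [Real.norm_eq_abs] using this
    refine ⟨h1, h2, fun ε hε => ?_⟩
    rcases lt_or_ge (ms t - ε) 0 with hneg | hnn
    · exact ⟨0, lt_of_lt_of_le hneg (abs_nonneg _)⟩
    · have hlt : ENNReal.ofReal (ms t - ε) < S t := by
        have h0 : ms t - ε < ms t := by linarith
        have : ENNReal.ofReal (ms t - ε) < ENNReal.ofReal (ms t) := by
          rw [ENNReal.ofReal_lt_ofReal_iff (by linarith : 0 < ms t)]
          exact h0
        rwa [hmsdef, ENNReal.ofReal_toReal hSne] at this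
      rw [lt_iSup_iff] at hlt
      obtain ⟨q, hq⟩ := hlt
      refine ⟨q, ?_⟩
      have : ENNReal.ofReal (ms t - ε) < ENNReal.ofReal |D q t| := by
        rwa [← enorm_eq_nnnorm, ← ofReal_norm, Real.norm_eq_abs] at hq
      exact (ENNReal.ofReal_lt_ofReal_iff_of_nonneg hnn).1 this
  have hms_int : Integrable ms := by
    refine hfa_int.mono' hms_meas.aestronglyMeasurable ?_
    filter_upwards [hgood] with t ht
    rw [Real.norm_eq_abs, abs_of_nonneg (hms_nonneg t)]
    exact (hmspt t (fun q => (ht.2 q).2)).1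
  have hDint : ∀ q : ℚ, Integrable (D q) := by
    intro q
    refine hfa_int.mono' (hDmeas q).aestronglyMeasurable ?_
    filter_upwards [hgood] with t ht
    rw [Real.norm_eq_abs]
    exact (ht.2 q).2
  -- FTC for the distance functions
  have hFTC : ∀ (q : ℚ) (t s : ℝ), t ≤ s → φ q s - φ q t = ∫ r in Ioc t s, D q r := by
    intro q t s hts
    have hdplus : ∀ᵐ r, deriv (fun s => F s + φ q s) r = fa r + D q r := by
      filter_upwards [hgood] with r hr
      exact (hr.1.add (hr.2 q).1.hasDerivAt).deriv
    have hdminus : ∀ᵐ r, deriv (fun s => F s - φ q s) r = fa r - D q r := by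
      filter_upwards [hgood] with r hr
      exact (hr.1.sub (hr.2 q).1.hasDerivAt).deriv
    have hFint : ∫ r in Ioc t s, fa r = F s - F t := by
      rw [hFsub, intervalIntegral.integral_of_le hts]
    have hplus := mono_cont_integral_deriv_le (hup q) (hFcont.add (hφcont q)) hts
    have hminus := mono_cont_integral_deriv_le (hum q) (hFcont.sub (hφcont q)) hts
    rw [integral_congr_ae (ae_restrict_of_ae hdplus),
      integral_add hfa_int.integrableOn (hDint q).integrableOn, hFint] at hplus
    rw [integral_congr_ae (ae_restrict_of_ae hdminus),
      integral_sub hfa_int.integrableOn (hDint q).integrableOn, hFint] at hminus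
    linarith
  -- admissibility of ms
  have hDms : ∀ q : ℚ, ∀ᵐ r, |D q r| ≤ ms r := by
    intro q
    filter_upwards [hgood] with r hr
    exact ((hmspt r (fun q' => (hr.2 q').2)).2.1 q)
  have hadm : ∀ t s : ℝ, t ≤ s → dist (G t) (G s) ≤ ∫ r in Ioc t s, ms r := by
    intro t s hts
    refine le_of_forall_pos_le_add ?_
    intro ε hε
    have hcont := Metric.tendsto_nhds.1 (hGcont.tendsto s) (ε/2) (half_pos hε)
    rw [Metric.eventually_nhds_iff] at hcont
    obtain ⟨δ, hδpos, hδ⟩ := hcont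
    obtain ⟨q, hq1, hq2⟩ := exists_rat_btwn (by linarith : s - δ < s)
    have hqd : dist (G (q:ℝ)) (G s) < ε/2 := by
      apply hδ
      rw [Real.dist_eq, abs_of_neg (by linarith : (q:ℝ) - s < 0)]
      linarith
    have hstep : |φ q t - φ q s| ≤ ∫ r in Ioc t s, ms r := by
      rw [abs_sub_comm]
      rw [hFTC q t s hts]
      calc ‖∫ r in Ioc t s, D q r‖ ≤ ∫ r in Ioc t s, ‖D q r‖ := norm_integral_le_integral_norm _
        _ ≤ ∫ r in Ioc t s, ms r := by
            refine integral_mono_ae ((hDint q).norm.integrableOn) hms_int.integrableOn ?_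
            refine ae_restrict_of_ae ?_
            filter_upwards [hDms q] with r hr
            simpa [Real.norm_eq_abs] using hr
    have htri : dist (G t) (G s) ≤ φ q t + ε/2 := by
      calc dist (G t) (G s) ≤ dist (G t) (G (q:ℝ)) + dist (G (q:ℝ)) (G s) := dist_triangle _ _ _
        _ ≤ φ q t + ε/2 := by
            have : dist (G t) (G (q:ℝ)) = φ q t := rfl
            linarith
    have hφts : φ q t ≤ |φ q t - φ q s| + φ q s := by
      have := abs_sub_abs_le_abs_sub (φ q t) (φ q s)
      have h1 : |φ q t| = φ q t := abs_of_nonneg dist_nonneg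
      have h2 : |φ q s| = φ q s := abs_of_nonneg dist_nonneg
      nlinarith [abs_sub (φ q t) (φ q s)]
    have hφs : φ q s < ε/2 := by
      have : φ q s = dist (G (q:ℝ)) (G s) := dist_comm (G s) (G (q:ℝ))
      linarith
    linarith
  -- primitive of ms
  set Pm : ℝ → ℝ := fun s => ∫ r in (0:ℝ)..s, ms r with hPmdef
  have hPm_ae : ∀ᵐ t, HasDerivAt Pm (ms t) t := ae_hasDerivAt_primitive hms_int
  have hPmsub : ∀ t s : ℝ, Pm s - Pm t = ∫ r in t..s, ms r := fun t s =>
    intervalIntegral.integral_interval_sub_left hms_int.intervalIntegrable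
      hms_int.intervalIntegrable
  have hPIoc : ∀ a b : ℝ, a ≤ b → ∫ r in Ioc a b, ms r = Pm b - Pm a := by
    intro a b hab
    rw [hPmsub, intervalIntegral.integral_of_le hab]
  -- the main limit statement (ambient form)
  have hlim : ∀ᵐ t, t ∈ Ioo (0:ℝ) 1 →
      Tendsto (fun h : ℝ => dist (γ (t + h)) (γ t) / |h|) (𝓝[≠] 0) (𝓝 (ms t)) := by
    filter_upwards [hgood, hPm_ae] with t htg hPt hIoo
    have h0t : 0 < t := hIoo.1
    have ht1 : t < 1 := hIoo.2
    have hcongr : ∀ᶠ h in 𝓝[≠] (0:ℝ),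
        dist (G (t + h)) (G t) / |h| = dist (γ (t + h)) (γ t) / |h| := by
      have hsm : ∀ᶠ h in 𝓝 (0:ℝ), |h| < min t (1 - t) := by
        have habs : Tendsto (fun h : ℝ => |h|) (𝓝 0) (𝓝 |(0:ℝ)|) := continuous_abs.tendsto 0
        rw [abs_zero] at habs
        exact habs.eventually (eventually_lt_nhds (lt_min h0t (by linarith)))
      filter_upwards [eventually_nhdsWithin_of_eventually_nhds hsm] with h hh
      have hmem : t + h ∈ Icc (0:ℝ) 1 := by
        have ha := abs_lt.1 (lt_of_lt_of_le hh (min_le_left _ _))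
        have hb := abs_lt.1 (lt_of_lt_of_le hh (min_le_right _ _))
        constructor <;> [linarith [ha.1]; linarith [hb.2]]
      rw [hGIcc _ hmem, hGIcc t ⟨h0t.le, ht1.le⟩]
    refine Tendsto.congr' hcongr ?_
    have hmap : Tendsto (fun h : ℝ => t + h) (𝓝[≠] (0:ℝ)) (𝓝[≠] t) := by
      apply tendsto_nhdsWithin_of_tendsto_nhds_of_eventually_within
      · have h1 : Tendsto (fun h : ℝ => t + h) (𝓝 0) (𝓝 (t + 0)) :=
          (continuous_const.add continuous_id).tendsto 0
        rw [add_zero] at h1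
        exact h1.mono_left nhdsWithin_le_nhds
      · filter_upwards [self_mem_nhdsWithin] with h (hh : h ≠ 0)
        simpa using hh
    have hPslope : Tendsto (fun h : ℝ => |slope Pm t (t + h)|) (𝓝[≠] 0) (𝓝 (ms t)) := by
      have h1 : Tendsto (fun h : ℝ => slope Pm t (t + h)) (𝓝[≠] 0) (𝓝 (ms t)) :=
        ((hasDerivAt_iff_tendsto_slope).1 hPt).comp hmap
      have h2 := (continuous_abs.tendsto (ms t)).comp h1
      simpa [Function.comp_def, abs_of_nonneg (hms_nonneg t)] using h2
    have hupper : ∀ᶠ h in 𝓝[≠] (0:ℝ),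
        dist (G (t + h)) (G t) / |h| ≤ |slope Pm t (t + h)| := by
      filter_upwards [self_mem_nhdsWithin] with h (hh : h ≠ 0)
      have hslope : |slope Pm t (t + h)| = |Pm (t + h) - Pm t| / |h| := by
        rw [slope_def_field, add_sub_cancel_left, abs_div]
      rw [hslope]
      refine div_le_div_of_nonneg_right ?_ (abs_nonneg h)
      rcases lt_or_gt_of_ne hh with hneg | hpos
      · have h1 := hadm (t + h) t (by linarith)
        rw [hPIoc _ _ (by linarith)] at h1
        calc dist (G (t + h)) (G t) ≤ Pm t - Pm (t + h) := h1
          _ ≤ |Pm (t + h) - Pm t| := by rw [abs_sub_comm]; exact le_abs_self _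
      · have h1 := hadm t (t + h) (by linarith)
        rw [hPIoc _ _ (by linarith), dist_comm] at h1
        exact h1.trans (le_abs_self _)
    rw [Metric.tendsto_nhds]
    intro ε hε
    obtain ⟨q, hq⟩ := (hmspt t (fun q => (htg.2 q).2)).2.2 (ε/2) (half_pos hε)
    have hφslope : Tendsto (fun h : ℝ => |slope (φ q) t (t + h)|) (𝓝[≠] 0) (𝓝 |D q t|) :=
      (continuous_abs.tendsto _).comp
        (((hasDerivAt_iff_tendsto_slope).1 (htg.2 q).1.hasDerivAt).comp hmap)
    have hlower : ∀ᶠ h in 𝓝[≠] (0:ℝ),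
        |slope (φ q) t (t + h)| ≤ dist (G (t + h)) (G t) / |h| := by
      filter_upwards [self_mem_nhdsWithin] with h (hh : h ≠ 0)
      rw [slope_def_field, add_sub_cancel_left, abs_div]
      exact div_le_div_of_nonneg_right (hφabs q t (t + h)) (abs_nonneg h)
    have hev1 := hPslope.eventually (eventually_lt_nhds (by linarith : ms t < ms t + ε))
    have hev2 := hφslope.eventually (eventually_gt_nhds (by linarith : ms t - ε < |D q t|))
    filter_upwards [hupper, hlower, hev1, hev2] with h h1 h2 h3 h4
    rw [Real.dist_eq, abs_sub_lt_iff]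
    exact ⟨by linarith, by linarith⟩
  -- transfer of ambient a.e. statements to the restricted measure
  have hres : ∀ (Q : ℝ → Prop), (∀ᵐ t, t ∈ Ioo (0:ℝ) 1 → Q t) →
      (∀ᵐ t ∂(volume.restrict (Icc (0:ℝ) 1)), Q t) := by
    intro Q hQ
    have h1 : ∀ᵐ t ∂(volume.restrict (Icc (0:ℝ) 1)), t ∈ Ioo (0:ℝ) 1 → Q t :=
      ae_restrict_of_ae hQ
    have h2 : ∀ᵐ t ∂(volume.restrict (Icc (0:ℝ) 1)), t ∈ Ioo (0:ℝ) 1 := by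
      rw [ae_iff]
      have heq : {t : ℝ | ¬ t ∈ Ioo (0:ℝ) 1} = (Ioo (0:ℝ) 1)ᶜ := rfl
      rw [heq, Measure.restrict_apply measurableSet_Ioo.compl]
      have hsub : ((Ioo (0:ℝ) 1)ᶜ ∩ Icc 0 1) ⊆ ({0, 1} : Set ℝ) := by
        rintro x ⟨hx1, hx2⟩
        simp only [mem_compl_iff, mem_Ioo, not_and_or, not_lt] at hx1
        rcases hx1 with hc | hc
        · left; exact le_antisymm hc hx2.1
        · right; exact le_antisymm hx2.2 hc
      exact measure_mono_null hsub
        (((finite_singleton (1:ℝ)).insert 0).measure_zero volume)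
    filter_upwards [h1, h2] with t ht h2' using ht h2'
  refine ⟨ms, hres _ hlim, hms_int.integrableOn, ?_, ?_⟩
  · -- admissibility
    intro t s ht hs hts
    rw [intervalIntegral.integral_of_le hts, ← hGIcc t ht, ← hGIcc s hs]
    exact hadm t s hts
  · -- minimality
    intro g hg hgadm
    set gt : ℝ → ℝ := (Icc (0:ℝ) 1).indicator g with hgtdef
    have hgt_int : Integrable gt := IntegrableOn.integrable_indicator hg measurableSet_Icc
    have hQ := ae_hasDerivAt_primitive hgt_int
    set Pg : ℝ → ℝ := fun s => ∫ r in (0:ℝ)..s, gt r with hPgdef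
    apply hres
    filter_upwards [hlim, hQ] with t hlim' hQ' hIoo
    have h0t : 0 < t := hIoo.1
    have ht1 : t < 1 := hIoo.2
    have htIcc : t ∈ Icc (0:ℝ) 1 := ⟨h0t.le, ht1.le⟩
    have hmono : (𝓝[>] (0:ℝ)) ≤ 𝓝[≠] 0 := nhdsWithin_mono _ fun x hx => ne_of_gt hx
    have L1 : Tendsto (fun h : ℝ => dist (γ (t + h)) (γ t) / |h|) (𝓝[>] 0) (𝓝 (ms t)) :=
      (hlim' hIoo).mono_left hmono
    have hmap2 : Tendsto (fun h : ℝ => t + h) (𝓝[>] (0:ℝ)) (𝓝[≠] t) := by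
      apply tendsto_nhdsWithin_of_tendsto_nhds_of_eventually_within
      · have h1 : Tendsto (fun h : ℝ => t + h) (𝓝 0) (𝓝 (t + 0)) :=
          (continuous_const.add continuous_id).tendsto 0
        rw [add_zero] at h1
        exact h1.mono_left nhdsWithin_le_nhds
      · filter_upwards [self_mem_nhdsWithin] with h (hh : 0 < h)
        simpa using ne_of_gt hh
    have L2 : Tendsto (fun h : ℝ => slope Pg t (t + h)) (𝓝[>] 0) (𝓝 (g t)) := by
      have h1 : Tendsto (fun h : ℝ => slope Pg t (t + h)) (𝓝[>] 0) (𝓝 (gt t)) :=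
        ((hasDerivAt_iff_tendsto_slope).1 hQ').comp hmap2
      rwa [hgtdef, indicator_of_mem htIcc] at h1
    have hev : ∀ᶠ h in 𝓝[>] (0:ℝ),
        dist (γ (t + h)) (γ t) / |h| ≤ slope Pg t (t + h) := by
      have hsm : ∀ᶠ h in 𝓝[>] (0:ℝ), h < 1 - t :=
        eventually_nhdsWithin_of_eventually_nhds (eventually_lt_nhds (by linarith))
      filter_upwards [hsm, self_mem_nhdsWithin] with h hh (hpos : 0 < h)
      have hmem : t + h ∈ Icc (0:ℝ) 1 := ⟨by linarith, by linarith⟩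
      have hint : ∫ r in t..(t + h), g r = ∫ r in t..(t + h), gt r := by
        apply intervalIntegral.integral_congr
        intro x hx
        rw [uIcc_of_le (by linarith : t ≤ t + h)] at hx
        have hxmem : x ∈ Icc (0:ℝ) 1 := ⟨by linarith [hx.1], by linarith [hx.2]⟩
        exact (indicator_of_mem hxmem g).symm
      have hd : dist (γ (t + h)) (γ t) ≤ Pg (t + h) - Pg t := by
        rw [dist_comm]
        calc dist (γ t) (γ (t + h)) ≤ ∫ r in t..(t + h), g r :=
              hgadm t (t + h) htIcc hmem (by linarith)
          _ = ∫ r in t..(t + h), gt r := hint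
          _ = Pg (t + h) - Pg t :=
              (intervalIntegral.integral_interval_sub_left hgt_int.intervalIntegrable
                hgt_int.intervalIntegrable).symm
      rw [slope_def_field, add_sub_cancel_left, abs_of_pos hpos]
      exact div_le_div_of_nonneg_right hd hpos.le
    exact le_of_tendsto_of_tendsto L1 L2 hev
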